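/- Let k > 2 with k ≤ n, and let J be the ideal of R generated by x₁(1−x_k) and by x_j(1−x_{j−1}) for 2 ≤ j ≤ k. Then CF(J) = {xᵢ·(1−x_j) : 1 ≤ i, j ≤ k, i ≠ j}. -/

import Mathlib

open MvPolynomial

/-- The pseudomonomial `∏_{i∈σ} xᵢ · ∏_{i∈τ} (1 - xᵢ)` in `F₂[x₁,…,xₙ]`. -/
noncomputable def psm (n : ℕ) (σ τ : Finset (Fin n)) : MvPolynomial (Fin n) (ZMod 2) :=
  (∏ i ∈ σ, X i) * ∏ i ∈ τ, (1 - X i)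

/-- A polynomial of `F₂[x₁,…,xₙ]` is a pseudomonomial if it has the form
`∏_{i∈σ} xᵢ · ∏_{i∈τ} (1 - xᵢ)` for disjoint `σ τ`. -/
def IsPseudomonomial {n : ℕ} (f : MvPolynomial (Fin n) (ZMod 2)) : Prop :=
  ∃ σ τ : Finset (Fin n), Disjoint σ τ ∧ f = psm n σ τ

/-- The canonical form of an ideal `J`: the set of minimal pseudomonomials of `J`,
i.e. pseudomonomials `f ∈ J` such that no pseudomonomial `g ≠ f` dividing `f` lies in `J`. -/
def CF {n : ℕ} (J : Ideal (MvPolynomial (Fin n) (ZMod 2))) :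
    Set (MvPolynomial (Fin n) (ZMod 2)) :=
  {f | IsPseudomonomial f ∧ f ∈ J ∧
    ∀ g : MvPolynomial (Fin n) (ZMod 2), IsPseudomonomial g → g ∣ f → g ≠ f → g ∉ J}

/-- "transitivity": `p(1-q), q(1-r) ∈ J → p(1-r) ∈ J`. -/
lemma psm_trans_mem {R : Type*} [CommRing R] {J : Ideal R} {p q r : R}
    (h1 : p * (1 - q) ∈ J) (h2 : q * (1 - r) ∈ J) : p * (1 - r) ∈ J := by
  have h : p * (1 - r) = (1 - r) * (p * (1 - q)) + p * (q * (1 - r)) := by ring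
  rw [h]
  exact J.add_mem (J.mul_mem_left _ h1) (J.mul_mem_left _ h2)

lemma eval_span_zero {n : ℕ} (S : Set (MvPolynomial (Fin n) (ZMod 2))) (p : Fin n → ZMod 2)
    (hS : ∀ g ∈ S, eval p g = 0) {f} (hf : f ∈ Ideal.span S) : eval p f = 0 := by
  have h : Ideal.span S ≤ RingHom.ker (eval p) :=
    Ideal.span_le.mpr (fun g hg => RingHom.mem_ker.mpr (hS g hg))
  exact RingHom.mem_ker.mp (h hf)

/-- membership of all `xᵢ(1-x_j)` following the cycle, by induction on the distance. -/
lemma chain_mem {n k : ℕ} (hk : 0 < k) (hkn : k ≤ n) (J : Ideal (MvPolynomial (Fin n) (ZMod 2)))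
    (hgen : ∀ j (hj : j < k), X (⟨j, lt_of_lt_of_le hj hkn⟩ : Fin n) *
      (1 - X (⟨(j + k - 1) % k, lt_of_lt_of_le (Nat.mod_lt _ hk) hkn⟩ : Fin n)) ∈ J) :
    ∀ d i j (_ : 1 ≤ d) (_ : d < k) (hi : i < k) (hj : j < k),
      (i = j + d ∨ i + k = j + d) →
      X (⟨i, lt_of_lt_of_le hi hkn⟩ : Fin n) * (1 - X (⟨j, lt_of_lt_of_le hj hkn⟩ : Fin n)) ∈ J := by
  intro d
  induction d with
  | zero => omega
  | succ d ih =>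
    intro i j _ hdk hi hj hcond
    by_cases hd : d = 0
    · -- base case: the generator itself
      subst hd
      have hmod : (i + k - 1) % k = j := by
        rcases hcond with h | h
        · rw [show i + k - 1 = j + k by omega, Nat.add_mod_right, Nat.mod_eq_of_lt hj]
        · rw [Nat.mod_eq_of_lt (by omega)]; omega
      have := hgen i hi
      convert this using 4
      · exact Fin.ext hmod.symm
    · -- step: go through j'' = successor of j in the cycle
      have hd1 : 1 ≤ d := by omega
      set j'' := if j + 1 = k then 0 else j + 1 with hj''
      have hj''k : j'' < k := by rw [hj'']; split <;> omega
      have hcond' : i = j'' + d ∨ i + k = j'' + d := by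
        rw [hj'']; split <;> omega
      have h1 := ih i j'' hd1 (by omega) hi hj''k hcond'
      -- generator from j'' to j
      have hmod : (j'' + k - 1) % k = j := by
        rw [hj'']; split
        · rw [Nat.mod_eq_of_lt (by omega)]; omega
        · rw [show j + 1 + k - 1 = j + k by omega, Nat.add_mod_right, Nat.mod_eq_of_lt hj]
      have h2 := hgen j'' hj''k
      have h2' : X (⟨j'', lt_of_lt_of_le hj''k hkn⟩ : Fin n) *
          (1 - X (⟨j, lt_of_lt_of_le hj hkn⟩ : Fin n)) ∈ J := by
        convert h2 using 4
        · exact Fin.ext hmod.symm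
      exact psm_trans_mem h1 h2'

set_option maxHeartbeats 1000000 in
theorem stmt8 {n k : ℕ} (hn : 0 < n) (hk : 2 < k) (hkn : k ≤ n)
    (xv yv : ℕ → MvPolynomial (Fin n) (ZMod 2))
    (hxv : ∀ j (h : j < n), xv j = X (⟨j, h⟩ : Fin n))
    (hyv : ∀ j (h : j < n), yv j = 1 - X (⟨j, h⟩ : Fin n)) :
    CF (Ideal.span {f | ∃ j < k, f = xv j * yv ((j + k - 1) % k)}) =
      {f | ∃ i j : ℕ, i < k ∧ j < k ∧ i ≠ j ∧ f = xv i * yv j} := by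
  have hk0 : 0 < k := by omega
  set S : Set (MvPolynomial (Fin n) (ZMod 2)) :=
    {f | ∃ j < k, f = xv j * yv ((j + k - 1) % k)} with hS
  set J := Ideal.span S with hJ
  -- generators in nice form
  have hgen : ∀ j (hj : j < k), X (⟨j, lt_of_lt_of_le hj hkn⟩ : Fin n) *
      (1 - X (⟨(j + k - 1) % k, lt_of_lt_of_le (Nat.mod_lt _ hk0) hkn⟩ : Fin n)) ∈ J := by
    intro j hj
    apply Ideal.subset_span
    exact ⟨j, hj, by rw [hxv _ (lt_of_lt_of_le hj hkn), hyv _ (lt_of_lt_of_le (Nat.mod_lt _ hk0) hkn)]⟩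
  -- key membership lemma
  have hmem : ∀ i j (hi : i < k) (hj : j < k), i ≠ j →
      X (⟨i, lt_of_lt_of_le hi hkn⟩ : Fin n) * (1 - X (⟨j, lt_of_lt_of_le hj hkn⟩ : Fin n)) ∈ J := by
    intro i j hi hj hij
    by_cases h : j < i
    · exact chain_mem hk0 hkn J hgen (i - j) i j (by omega) (by omega) hi hj (by omega)
    · exact chain_mem hk0 hkn J hgen (i + k - j) i j (by omega) (by omega) hi hj (by omega)
  -- evaluation of generators
  have hgen_eval : ∀ (p : Fin n → ZMod 2),
      (∀ j (hj : j < k), p ⟨j, lt_of_lt_of_le hj hkn⟩ *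
        (1 - p ⟨(j + k - 1) % k, lt_of_lt_of_le (Nat.mod_lt _ hk0) hkn⟩) = 0) →
      ∀ f ∈ J, eval p f = 0 := by
    intro p hp f hf
    refine eval_span_zero S p ?_ hf
    rintro g ⟨j, hj, rfl⟩
    rw [hxv _ (lt_of_lt_of_le hj hkn), hyv _ (lt_of_lt_of_le (Nat.mod_lt _ hk0) hkn)]
    simpa using hp j hj
  -- nonmembership of trivial pseudomonomials
  have hone : (1 : MvPolynomial (Fin n) (ZMod 2)) ∉ J := by
    intro h
    have := hgen_eval (fun _ => 0) (by intro j hj; ring) 1 h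
    simp at this
  have hXnot : ∀ i : Fin n, (X i : MvPolynomial (Fin n) (ZMod 2)) ∉ J := by
    intro i h
    have := hgen_eval (fun _ => 1) (by intro j hj; ring) _ h
    simp at this
  have hYnot : ∀ i : Fin n, (1 - X i : MvPolynomial (Fin n) (ZMod 2)) ∉ J := by
    intro i h
    have := hgen_eval (fun _ => 0) (by intro j hj; ring) _ h
    simp at this
  -- divisor index determination
  have hdvdX : ∀ (a i j : Fin n), i ≠ j →
      (X a : MvPolynomial (Fin n) (ZMod 2)) ∣ X i * (1 - X j) → a = i := by
    intro a i j hij ⟨h, hh⟩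
    by_contra hai
    set p : Fin n → ZMod 2 := fun c => if c = i then 1 else 0 with hp
    have := congrArg (eval p) hh
    simp [hp, if_neg hai, if_neg (Ne.symm hij)] at this
  have hdvdY : ∀ (b i j : Fin n), i ≠ j →
      (1 - X b : MvPolynomial (Fin n) (ZMod 2)) ∣ X i * (1 - X j) → b = j := by
    intro b i j hij ⟨h, hh⟩
    by_contra hbj
    set p : Fin n → ZMod 2 := fun c => if c = j then 0 else 1 with hp
    have := congrArg (eval p) hh
    simp [hp, if_neg hij, if_neg hbj] at this
  ext f
  constructor
  · rintro ⟨⟨σ, τ, hdisj, rfl⟩, hfJ, hmin⟩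
    -- must contain some index < k in both σ and τ
    have hσ : ∃ a ∈ σ, (a : ℕ) < k := by
      by_contra hc
      push_neg at hc
      set p : Fin n → ZMod 2 := fun c => if c ∈ σ then 1 else 0 with hp
      have h0 := hgen_eval p ?_ _ hfJ
      · rw [show eval p (psm n σ τ) = (∏ i ∈ σ, p i) * ∏ i ∈ τ, (1 - p i) by simp [psm]] at h0
        rw [Finset.prod_eq_one (fun i hi => by simp [hp, hi]),
            Finset.prod_eq_one (fun i hi => by
              simp [hp, Finset.disjoint_right.mp hdisj hi])] at h0
        simp at h0
      · intro j hj
        have : (⟨j, lt_of_lt_of_le hj hkn⟩ : Fin n) ∉ σ := fun h => absurd hj (by simpa using hc _ h)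
        simp [hp, this]
    have hτ : ∃ b ∈ τ, (b : ℕ) < k := by
      by_contra hc
      push_neg at hc
      set p : Fin n → ZMod 2 := fun c => if (c : ℕ) < k ∨ c ∈ σ then 1 else 0 with hp
      have h0 := hgen_eval p ?_ _ hfJ
      · rw [show eval p (psm n σ τ) = (∏ i ∈ σ, p i) * ∏ i ∈ τ, (1 - p i) by simp [psm]] at h0
        rw [Finset.prod_eq_one (fun i hi => by simp [hp, hi]),
            Finset.prod_eq_one (fun i hi => by
              simp [hp, Finset.disjoint_right.mp hdisj hi, hc i hi])] at h0
        simp at h0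
      · intro j hj
        have h1 : p ⟨(j + k - 1) % k, lt_of_lt_of_le (Nat.mod_lt _ hk0) hkn⟩ = 1 := by
          simp [hp, Nat.mod_lt _ hk0]
        rw [h1]; ring
    obtain ⟨a, haσ, hak⟩ := hσ
    obtain ⟨b, hbτ, hbk⟩ := hτ
    have hab : a ≠ b := fun h => Finset.disjoint_left.mp hdisj haσ (h ▸ hbτ)
    have habv : (a : ℕ) ≠ (b : ℕ) := fun h => hab (Fin.ext h)
    have hgJ : (X a : MvPolynomial (Fin n) (ZMod 2)) * (1 - X b) ∈ J := by
      have := hmem a b hak hbk habv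
      simpa using this
    have hgdvd : (X a : MvPolynomial (Fin n) (ZMod 2)) * (1 - X b) ∣ psm n σ τ := by
      exact mul_dvd_mul (Finset.dvd_prod_of_mem _ haσ) (Finset.dvd_prod_of_mem _ hbτ)
    have hgpsm : IsPseudomonomial ((X a : MvPolynomial (Fin n) (ZMod 2)) * (1 - X b)) :=
      ⟨{a}, {b}, by simpa using hab, by simp [psm]⟩
    have heq : (X a : MvPolynomial (Fin n) (ZMod 2)) * (1 - X b) = psm n σ τ := by
      by_contra hne
      exact hmin _ hgpsm hgdvd hne hgJ
    refine ⟨a, b, hak, hbk, habv, ?_⟩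
    rw [hxv _ a.isLt, hyv _ b.isLt, ← heq]
  · rintro ⟨i, j, hi, hj, hij, rfl⟩
    rw [hxv _ (lt_of_lt_of_le hi hkn), hyv _ (lt_of_lt_of_le hj hkn)]
    set ii : Fin n := ⟨i, lt_of_lt_of_le hi hkn⟩ with hii
    set jj : Fin n := ⟨j, lt_of_lt_of_le hj hkn⟩ with hjj
    have hiijj : ii ≠ jj := fun h => hij (by simpa [hii, hjj] using congrArg Fin.val h)
    refine ⟨⟨{ii}, {jj}, by simpa using hiijj, by simp [psm]⟩, hmem i j hi hj hij, ?_⟩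
    rintro g ⟨σ', τ', hdisj', rfl⟩ hdvd hne hgJ
    unfold psm at hdvd
    have hσ' : σ' ⊆ {ii} := by
      intro a ha
      have : (X a : MvPolynomial (Fin n) (ZMod 2)) ∣ X ii * (1 - X jj) :=
        dvd_trans (dvd_trans (Finset.dvd_prod_of_mem _ ha) (dvd_mul_right _ _)) hdvd
      simpa using hdvdX a ii jj hiijj this
    have hτ' : τ' ⊆ {jj} := by
      intro b hb
      have : (1 - X b : MvPolynomial (Fin n) (ZMod 2)) ∣ X ii * (1 - X jj) :=
        dvd_trans (dvd_trans (Finset.dvd_prod_of_mem (fun i : Fin n => (1 - X i : MvPolynomial (Fin n) (ZMod 2))) hb)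
          (dvd_mul_left (∏ i ∈ τ', (1 - X i : MvPolynomial (Fin n) (ZMod 2))) (∏ i ∈ σ', X i))) hdvd
      simpa using hdvdY b ii jj hiijj this
    rcases Finset.subset_singleton_iff.mp hσ' with h1 | h1 <;>
      rcases Finset.subset_singleton_iff.mp hτ' with h2 | h2 <;> subst h1 <;> subst h2
    · exact hone (by simpa [psm] using hgJ)
    · exact hYnot jj (by simpa [psm] using hgJ)
    · exact hXnot ii (by simpa [psm] using hgJ)
    · exact hne (by simp [psm])
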